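/- Fix constants c₀ > 0, β > 0, α ∈ (0,1], and define Υ(x) := (−c₀ x − (c₀/2) β^α x²) / (1 + β x^(1/α))^(2α) for x ≥ 0. Then sup_{x ≥ 1} Υ(x) ≤ max( Υ(1), lim_{x→∞} Υ(x) ), where Υ(1) = (−c₀ − (c₀/2) β^α)/(1 + β)^(2α) and lim_{x→∞} Υ(x) = −c₀/(2 β^α). In particular sup_{x≥1} Υ(x) ≤ −c₀ / (2 (1 + β)^(2α)) whenever β ≤ β₀ for a fixed β₀ with (1+β)^(2α) ≤ (1+β₀)^(2α). -/

import Mathlib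

open Real Filter Set

noncomputable def Upsilon (c₀ β α : ℝ) (x : ℝ) : ℝ :=
  (-c₀ * x - c₀ / 2 * β ^ α * x ^ 2) / (1 + β * x ^ (1 / α)) ^ (2 * α)

lemma ups_hasDerivAt {c₀ β α : ℝ} (hβ : 0 < β) (hα0 : 0 < α) {x : ℝ} (hx : 0 < x) :
    HasDerivAt (Upsilon c₀ β α)
      (c₀ * (β * x ^ (1 / α) - β ^ α * x - 1) * (1 + β * x ^ (1 / α)) ^ (2 * α - 1)
        / ((1 + β * x ^ (1 / α)) ^ (2 * α)) ^ 2) x := by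
  have hw0 : (0:ℝ) < 1 + β * x ^ (1 / α) := by positivity
  have hN : HasDerivAt (fun x : ℝ => -c₀ * x - c₀ / 2 * β ^ α * x ^ 2)
      (-c₀ - c₀ / 2 * β ^ α * (2 * x)) x := by
    have h1 : HasDerivAt (fun x : ℝ => -c₀ * x) (-c₀) x := by
      simpa using (hasDerivAt_id x).const_mul (-c₀)
    have h2 : HasDerivAt (fun x : ℝ => x ^ 2) (2 * x) x := by
      simpa using hasDerivAt_pow 2 x
    exact h1.sub (h2.const_mul (c₀ / 2 * β ^ α))
  have hg : HasDerivAt (fun x : ℝ => 1 + β * x ^ (1 / α)) (β * ((1 / α) * x ^ (1 / α - 1))) x := by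
    have h3 := Real.hasDerivAt_rpow_const (x := x) (p := 1 / α) (Or.inl hx.ne')
    simpa using (h3.const_mul β).const_add 1
  have hD := hg.rpow_const (p := 2 * α) (Or.inl hw0.ne')
  have h := hN.div hD (by positivity)
  have hval : (-c₀ - c₀ / 2 * β ^ α * (2 * x)) * (1 + β * x ^ (1 / α)) ^ (2 * α)
        - (-c₀ * x - c₀ / 2 * β ^ α * x ^ 2)
          * (β * ((1 / α) * x ^ (1 / α - 1)) * (2 * α) * (1 + β * x ^ (1 / α)) ^ (2 * α - 1))
      = c₀ * (β * x ^ (1 / α) - β ^ α * x - 1) * (1 + β * x ^ (1 / α)) ^ (2 * α - 1) := by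
    have hu : x ^ (1 / α - 1) = x ^ (1 / α) / x := by
      rw [Real.rpow_sub hx, Real.rpow_one]
    have hw : (1 + β * x ^ (1 / α)) ^ (2 * α)
        = (1 + β * x ^ (1 / α)) ^ (2 * α - 1) * (1 + β * x ^ (1 / α)) := by
      rw [← Real.rpow_add_one hw0.ne' (2 * α - 1)]; ring_nf
    rw [hu, hw]
    have hαne : α ≠ 0 := hα0.ne'
    field_simp
    ring

  have h2 : HasDerivAt (fun y => (-c₀ * y - c₀ / 2 * β ^ α * y ^ 2) / (1 + β * y ^ (1 / α)) ^ (2 * α))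
      (c₀ * (β * x ^ (1 / α) - β ^ α * x - 1) * (1 + β * x ^ (1 / α)) ^ (2 * α - 1)
        / ((1 + β * x ^ (1 / α)) ^ (2 * α)) ^ 2) x := by
    rw [← hval]
    exact h
  exact h2

lemma phi_down {β α : ℝ} (hβ : 0 < β) (hα0 : 0 < α) (hα1 : α ≤ 1) {x t : ℝ}
    (hx : β * x ^ (1 / α) - β ^ α * x - 1 ≤ 0) (ht0 : 0 < t) (htx : t ≤ x) :
    β * t ^ (1 / α) - β ^ α * t - 1 ≤ 0 := by
  have hx0 : 0 < x := lt_of_lt_of_le ht0 htx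
  have hs1 : t / x ≤ 1 := (div_le_one hx0).mpr htx
  have hs0 : 0 < t / x := by positivity
  have h1 : t ^ (1 / α) = (t / x) ^ (1 / α) * x ^ (1 / α) := by
    rw [← Real.mul_rpow hs0.le hx0.le, div_mul_cancel₀ _ hx0.ne']
  have h2 : (t / x) ^ (1 / α) ≤ t / x := by
    have := Real.rpow_le_rpow_of_exponent_ge hs0 hs1 (by
      rw [le_div_iff₀ hα0]; linarith : (1:ℝ) ≤ 1 / α)
    simpa using this
  have h3 : t ^ (1 / α) ≤ (t / x) * x ^ (1 / α) := by
    rw [h1]; exact mul_le_mul_of_nonneg_right h2 (Real.rpow_nonneg hx0.le _)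
  have hb : (0:ℝ) ≤ β ^ α := Real.rpow_nonneg hβ.le _
  have hxr : (0:ℝ) ≤ x ^ (1 / α) := Real.rpow_nonneg hx0.le _
  -- β t^{1/α} ≤ (t/x) β x^{1/α} ≤ (t/x)(β^α x + 1) = β^α t + t/x ≤ β^α t + 1
  have key : (t / x) * (β * x ^ (1 / α)) ≤ (t / x) * (β ^ α * x + 1) :=
    mul_le_mul_of_nonneg_left (by linarith) hs0.le
  have he : (t / x) * (β ^ α * x + 1) = β ^ α * t + t / x := by field_simp
  nlinarith [mul_le_mul_of_nonneg_left h3 hβ.le]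

lemma phi_up {β α : ℝ} (hβ : 0 < β) (hα0 : 0 < α) (hα1 : α ≤ 1) {x t : ℝ}
    (hx : 0 ≤ β * x ^ (1 / α) - β ^ α * x - 1) (hx0 : 0 < x) (hxt : x ≤ t) :
    0 ≤ β * t ^ (1 / α) - β ^ α * t - 1 := by
  have ht0 : 0 < t := lt_of_lt_of_le hx0 hxt
  have hs1 : x / t ≤ 1 := (div_le_one ht0).mpr hxt
  have hs0 : 0 < x / t := by positivity
  have h1 : x ^ (1 / α) = (x / t) ^ (1 / α) * t ^ (1 / α) := by
    rw [← Real.mul_rpow hs0.le ht0.le, div_mul_cancel₀ _ ht0.ne']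
  have h2 : (x / t) ^ (1 / α) ≤ x / t := by
    have := Real.rpow_le_rpow_of_exponent_ge hs0 hs1 (by
      rw [le_div_iff₀ hα0]; linarith : (1:ℝ) ≤ 1 / α)
    simpa using this
  have h3 : x ^ (1 / α) ≤ (x / t) * t ^ (1 / α) := by
    rw [h1]; exact mul_le_mul_of_nonneg_right h2 (Real.rpow_nonneg ht0.le _)
  have hb : (0:ℝ) ≤ β ^ α := Real.rpow_nonneg hβ.le _
  -- β^α x + 1 ≤ β x^{1/α} ≤ (x/t) β t^{1/α} ⇒ β^α x t + t ≤ x β t^{1/α} ⇒ ...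
  have key : β ^ α * x + 1 ≤ (x / t) * (β * t ^ (1 / α)) := by
    nlinarith [mul_le_mul_of_nonneg_left h3 hβ.le]
  have key2 : (β ^ α * x + 1) * t ≤ x * (β * t ^ (1 / α)) := by
    have := mul_le_mul_of_nonneg_right key ht0.le
    calc (β ^ α * x + 1) * t ≤ ((x / t) * (β * t ^ (1 / α))) * t := this
      _ = x * (β * t ^ (1 / α)) := by field_simp
  -- divide by x : β^α t + t/x ≤ β t^{1/α}, t/x ≥ 1
  have htx1 : 1 ≤ t / x := (one_le_div hx0).mpr hxt
  have htr : (0:ℝ) ≤ t ^ (1 / α) := Real.rpow_nonneg ht0.le _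
  nlinarith [key2, mul_pos hx0 ht0]

lemma ups_eq {c₀ β α : ℝ} (hβ : 0 < β) (hα0 : 0 < α) {x : ℝ} (hx : 0 < x) :
    Upsilon c₀ β α x = (-c₀ / x - c₀ / 2 * β ^ α) / (x ^ (-(1 / α)) + β) ^ (2 * α) := by
  have hαne : α ≠ 0 := hα0.ne'
  have hk0 : (0:ℝ) < x ^ (-(1 / α)) + β := by positivity
  have hfac : 1 + β * x ^ (1 / α) = x ^ (1 / α) * (x ^ (-(1 / α)) + β) := by
    rw [mul_add, ← Real.rpow_add hx]
    simp [mul_comm]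
  have hden : (1 + β * x ^ (1 / α)) ^ (2 * α)
      = x ^ 2 * (x ^ (-(1 / α)) + β) ^ (2 * α) := by
    rw [hfac, Real.mul_rpow (Real.rpow_nonneg hx.le _) hk0.le,
      ← Real.rpow_mul hx.le,
      show (1 / α) * (2 * α) = ((2:ℕ):ℝ) by push_cast; field_simp,
      Real.rpow_natCast]
  rw [Upsilon, hden]
  have hkne : (x ^ (-(1 / α)) + β) ^ (2 * α) ≠ 0 := by positivity
  field_simp

lemma ups_tendsto {c₀ β α : ℝ} (hβ : 0 < β) (hα0 : 0 < α) :
    Tendsto (Upsilon c₀ β α) atTop (nhds (-c₀ / (2 * β ^ α))) := by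
  have h1 : Tendsto (fun x : ℝ => -c₀ / x) atTop (nhds 0) :=
    tendsto_const_nhds.div_atTop tendsto_id
  have h2 : Tendsto (fun x : ℝ => x ^ (-(1 / α))) atTop (nhds 0) :=
    tendsto_rpow_neg_atTop (by positivity)
  have h3 : Tendsto (fun x : ℝ => (x ^ (-(1 / α)) + β) ^ (2 * α)) atTop
      (nhds (β ^ (2 * α))) := by
    have hadd : Tendsto (fun x : ℝ => x ^ (-(1 / α)) + β) atTop (nhds β) := by
      simpa using h2.add_const β
    exact ((Real.continuousAt_rpow_const β (2 * α) (Or.inl hβ.ne')).tendsto).comp hadd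
  have hnum : Tendsto (fun x : ℝ => -c₀ / x - c₀ / 2 * β ^ α) atTop
      (nhds (-(c₀ / 2 * β ^ α))) := by
    simpa using h1.sub_const (c₀ / 2 * β ^ α)
  have hb : (0:ℝ) < β ^ α := Real.rpow_pos_of_pos hβ _
  have hbb : (0:ℝ) < β ^ (2 * α) := Real.rpow_pos_of_pos hβ _
  have hdiv := hnum.div h3 hbb.ne'
  have hL : (-(c₀ / 2 * β ^ α)) / β ^ (2 * α) = -c₀ / (2 * β ^ α) := by
    have : β ^ (2 * α) = β ^ α * β ^ α := by
      rw [← Real.rpow_add hβ]; ring_nf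
    rw [this]
    field_simp
  rw [hL] at hdiv
  refine hdiv.congr' ?_
  filter_upwards [eventually_gt_atTop (0:ℝ)] with x hx
  exact (ups_eq hβ hα0 hx).symm

theorem stmt6 (c₀ β α : ℝ) (hc₀ : 0 < c₀) (hβ : 0 < β) (hα0 : 0 < α) (hα1 : α ≤ 1) :
    (∀ x : ℝ, 1 ≤ x → Upsilon c₀ β α x ≤
        max (Upsilon c₀ β α 1) (-c₀ / (2 * β ^ α))) ∧
    Upsilon c₀ β α 1 = (-c₀ - c₀ / 2 * β ^ α) / (1 + β) ^ (2 * α) ∧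
    Filter.Tendsto (Upsilon c₀ β α) Filter.atTop (nhds (-c₀ / (2 * β ^ α))) ∧
    (∀ β₀ : ℝ, 0 < β₀ → β ≤ β₀ →
      ∀ x : ℝ, 1 ≤ x → Upsilon c₀ β α x ≤ -c₀ / (2 * (1 + β₀) ^ (2 * α))) := by
  have hb : (0:ℝ) < β ^ α := Real.rpow_pos_of_pos hβ _
  have hlim := ups_tendsto (c₀ := c₀) hβ hα0
  have key : ∀ x : ℝ, 1 ≤ x → Upsilon c₀ β α x ≤
      max (Upsilon c₀ β α 1) (-c₀ / (2 * β ^ α)) := by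
    intro x hx1
    have hx0 : (0:ℝ) < x := lt_of_lt_of_le one_pos hx1
    rcases le_or_gt (β * x ^ (1 / α) - β ^ α * x - 1) 0 with hneg | hpos
    · -- Upsilon antitone on [1, x]
      have hanti : AntitoneOn (Upsilon c₀ β α) (Icc 1 x) := by
        apply antitoneOn_of_deriv_nonpos (convex_Icc 1 x)
        · intro t ht
          exact (ups_hasDerivAt (c₀ := c₀) hβ hα0
            (lt_of_lt_of_le one_pos ht.1)).differentiableAt.continuousAt.continuousWithinAt
        · rw [interior_Icc]
          intro t ht
          exact (ups_hasDerivAt (c₀ := c₀) hβ hα0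
            (lt_trans one_pos ht.1)).differentiableAt.differentiableWithinAt
        · rw [interior_Icc]
          intro t ht
          have ht0 : (0:ℝ) < t := lt_trans one_pos ht.1
          rw [(ups_hasDerivAt (c₀ := c₀) hβ hα0 ht0).deriv]
          have hphi := phi_down hβ hα0 hα1 hneg ht0 ht.2.le
          have hw0 : (0:ℝ) < 1 + β * t ^ (1 / α) := by positivity
          have hwp : (0:ℝ) ≤ (1 + β * t ^ (1 / α)) ^ (2 * α - 1) :=
            (Real.rpow_pos_of_pos hw0 _).le
          apply div_nonpos_of_nonpos_of_nonneg
          · exact mul_nonpos_of_nonpos_of_nonneg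
              (mul_nonpos_of_nonneg_of_nonpos hc₀.le hphi) hwp
          · positivity
      exact le_trans (hanti ⟨le_refl 1, hx1⟩ ⟨hx1, le_refl x⟩ hx1) (le_max_left _ _)
    · -- Upsilon monotone on [x, ∞)
      have hmono : MonotoneOn (Upsilon c₀ β α) (Ici x) := by
        apply monotoneOn_of_deriv_nonneg (convex_Ici x)
        · intro t ht
          exact (ups_hasDerivAt (c₀ := c₀) hβ hα0
            (lt_of_lt_of_le hx0 ht)).differentiableAt.continuousAt.continuousWithinAt
        · rw [interior_Ici]
          intro t ht
          exact (ups_hasDerivAt (c₀ := c₀) hβ hα0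
            (lt_trans hx0 ht)).differentiableAt.differentiableWithinAt
        · rw [interior_Ici]
          intro t ht
          have ht0 : (0:ℝ) < t := lt_trans hx0 ht
          rw [(ups_hasDerivAt (c₀ := c₀) hβ hα0 ht0).deriv]
          have hphi := phi_up hβ hα0 hα1 hpos.le hx0 ht.le
          have hw0 : (0:ℝ) < 1 + β * t ^ (1 / α) := by positivity
          apply div_nonneg _ (by positivity)
          have : (0:ℝ) ≤ c₀ * (β * t ^ (1 / α) - β ^ α * t - 1) :=
            mul_nonneg hc₀.le hphi
          exact mul_nonneg this (Real.rpow_pos_of_pos hw0 _).le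
      have hle : Upsilon c₀ β α x ≤ -c₀ / (2 * β ^ α) := by
        refine ge_of_tendsto hlim ?_
        filter_upwards [eventually_ge_atTop x] with t ht
        exact hmono (self_mem_Ici) ht ht
      exact le_trans hle (le_max_right _ _)
  refine ⟨key, ?_, hlim, ?_⟩
  · rw [Upsilon]
    norm_num
  · intro β₀ hβ₀ hββ₀ x hx1
    refine le_trans (key x hx1) (max_le ?_ ?_)
    · -- Upsilon 1 ≤ -c₀ / (2 (1+β₀)^(2α))
      have hA : (0:ℝ) < (1 + β) ^ (2 * α) := Real.rpow_pos_of_pos (by linarith) _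
      have hB : (0:ℝ) < (1 + β₀) ^ (2 * α) := Real.rpow_pos_of_pos (by linarith) _
      have hAB : (1 + β) ^ (2 * α) ≤ (1 + β₀) ^ (2 * α) :=
        Real.rpow_le_rpow (by linarith) (by linarith) (by positivity)
      have h1 : Upsilon c₀ β α 1 = (-c₀ - c₀ / 2 * β ^ α) / (1 + β) ^ (2 * α) := by
        rw [Upsilon]; norm_num
      rw [h1, div_le_div_iff₀ hA (by positivity)]
      nlinarith [hb.le, mul_pos hc₀ hB]
    · -- -c₀/(2 β^α) ≤ -c₀/(2 (1+β₀)^(2α))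
      have hB : (0:ℝ) < (1 + β₀) ^ (2 * α) := Real.rpow_pos_of_pos (by linarith) _
      have h1 : β ^ α ≤ (1 + β₀) ^ α :=
        Real.rpow_le_rpow hβ.le (by linarith) hα0.le
      have h2 : (1 + β₀) ^ α ≤ (1 + β₀) ^ (2 * α) :=
        Real.rpow_le_rpow_of_exponent_le (by linarith) (by linarith)
      rw [div_le_div_iff₀ (by positivity) (by positivity)]
      nlinarith [mul_pos hc₀ hB, mul_pos hc₀ hb]
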